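/- arXiv:math/0307184 — 2 statements merged into one kernel-verified Lean document; each statement's English description precedes it below -/
import Mathlib

section
/- Let 𝔰 be a ℤ-graded real Lie algebra, 𝔩 an 𝔰-module, and Y ∈ 𝔩. Then the 𝔰-submodule of 𝔩 generated by Y is spanned (as a vector space) by the homogeneous decreasing Lie monomials in Y, i.e. by elements of the form [X₁,[X₂,…,[Xᵣ,Y]…]] where each Xᵢ is a homogeneous element of 𝔰 and deg(X₁) ≥ deg(X₂) ≥ … ≥ deg(Xᵣ). -/
open List

namespace MonoAux

variable {L M : Type*} [LieRing L] [LieAlgebra ℝ L]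
  [AddCommGroup M] [Module ℝ M] [LieRingModule L M] [LieModule ℝ L M]

/-- inversion count of a list of integers (pairs `i < j` with `l i < l j`). -/
def inv : List ℤ → ℕ
  | [] => 0
  | a :: t => t.countP (fun b => decide (a < b)) + inv t

lemma foldr_bracket_add (a : List (ℤ × L)) (u v : M) :
    a.foldr (fun pX acc => ⁅pX.2, acc⁆) (u + v) =
      a.foldr (fun pX acc => ⁅pX.2, acc⁆) u + a.foldr (fun pX acc => ⁅pX.2, acc⁆) v := by
  induction a with
  | nil => rfl
  | cons hd t ih => simp [ih, lie_add]

lemma swap_identity (Y : M) (a b : List (ℤ × L)) (p q : ℤ) (x y : L) :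
    (a ++ (p, x) :: (q, y) :: b).foldr (fun pX acc => ⁅pX.2, acc⁆) Y =
      (a ++ (q, y) :: (p, x) :: b).foldr (fun pX acc => ⁅pX.2, acc⁆) Y +
      (a ++ (p + q, ⁅x, y⁆) :: b).foldr (fun pX acc => ⁅pX.2, acc⁆) Y := by
  have core : ((p, x) :: (q, y) :: b).foldr (fun pX acc => ⁅pX.2, acc⁆) Y =
      ((q, y) :: (p, x) :: b).foldr (fun pX acc => ⁅pX.2, acc⁆) Y +
      (((p + q, ⁅x, y⁆) :: b).foldr (fun pX acc => ⁅pX.2, acc⁆) Y) := by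
    simp only [List.foldr_cons]
    rw [leibniz_lie]
    abel
  simp only [List.foldr_append, core, foldr_bracket_add]

lemma inv_swap (a b : List ℤ) (p q : ℤ) (h : p < q) :
    inv (a ++ p :: q :: b) = inv (a ++ q :: p :: b) + 1 := by
  induction a with
  | nil =>
    simp [inv, List.countP_cons, h, not_lt.2 h.le]
    omega
  | cons c a ih =>
    simp only [List.cons_append, inv, ih]
    simp [List.countP_append, List.countP_cons]
    omega

lemma sorted_or_adjacent_inversion (l : List (ℤ × L)) :
    (l.map Prod.fst).Pairwise (· ≥ ·) ∨
      ∃ (a : List (ℤ × L)) (p : ℤ) (x : L) (q : ℤ) (y : L) (b : List (ℤ × L)),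
        l = a ++ (p, x) :: (q, y) :: b ∧ p < q := by
  induction l with
  | nil => exact Or.inl (List.Pairwise.nil)
  | cons hd t ih =>
    rcases ih with hs | ⟨a, p, x, q, y, b, rfl, hpq⟩
    · cases t with
      | nil => exact Or.inl (List.pairwise_singleton _ _)
      | cons hd2 t' =>
        by_cases hge : hd2.1 ≤ hd.1
        · left
          rw [List.map_cons, List.pairwise_cons]
          refine ⟨?_, hs⟩
          intro b hb
          rw [List.map_cons, List.pairwise_cons] at hs
          rcases hb with hb
          simp only [List.map_cons, List.mem_cons] at hb
          rcases hb with rfl | hb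
          · exact hge
          · exact le_trans (hs.1 b (by simpa using hb)) hge
        · right
          exact ⟨[], hd.1, hd.2, hd2.1, hd2.2, t', by simp, not_le.1 hge⟩
    · exact Or.inr ⟨hd :: a, p, x, q, y, b, by simp, hpq⟩

lemma key (g : ℤ → Submodule ℝ L)
    (hgb : ∀ p q : ℤ, ∀ x ∈ g p, ∀ y ∈ g q, ⁅x, y⁆ ∈ g (p + q)) (Y : M) (n : ℕ) :
    ∀ (k : ℕ) (l : List (ℤ × L)), l.length ≤ n → inv (l.map Prod.fst) ≤ k →
      (∀ pX ∈ l, pX.2 ∈ g pX.1) →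
      l.foldr (fun pX acc => ⁅pX.2, acc⁆) Y ∈
        Submodule.span ℝ { m : M | ∃ l' : List (ℤ × L),
          (∀ pX ∈ l', pX.2 ∈ g pX.1) ∧ (l'.map Prod.fst).Pairwise (· ≥ ·) ∧
          m = l'.foldr (fun pX acc => ⁅pX.2, acc⁆) Y } := by
  induction n with
  | zero =>
    intro k l hlen _ hm
    have : l = [] := List.length_eq_zero_iff.mp (Nat.le_zero.mp hlen)
    subst this
    exact Submodule.subset_span ⟨[], by simp, List.Pairwise.nil, rfl⟩
  | succ n ihn =>
    intro k
    induction k with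
    | zero =>
      intro l hlen hinv hm
      rcases sorted_or_adjacent_inversion l with hs | ⟨a, p, x, q, y, b, rfl, hpq⟩
      · exact Submodule.subset_span ⟨l, hm, hs, rfl⟩
      · exfalso
        have := inv_swap (a.map Prod.fst) (b.map Prod.fst) p q hpq
        simp only [List.map_append, List.map_cons] at hinv
        omega
    | succ k ihk =>
      intro l hlen hinv hm
      rcases sorted_or_adjacent_inversion l with hs | ⟨a, p, x, q, y, b, rfl, hpq⟩
      · exact Submodule.subset_span ⟨l, hm, hs, rfl⟩
      · rw [swap_identity]
        have hx : x ∈ g p := hm (p, x) (by simp)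
        have hy : y ∈ g q := hm (q, y) (by simp)
        refine add_mem ?_ ?_
        · refine ihk (a ++ (q, y) :: (p, x) :: b) (by simpa using hlen) ?_ ?_
          · have := inv_swap (a.map Prod.fst) (b.map Prod.fst) p q hpq
            simp only [List.map_append, List.map_cons] at hinv ⊢
            omega
          · intro pX hpX
            simp only [List.mem_append, List.mem_cons] at hpX
            rcases hpX with h | rfl | rfl | h
            · exact hm pX (by simp [h])
            · exact hy
            · exact hx
            · exact hm pX (by simp [h])
        · refine ihn (inv ((a ++ (p + q, ⁅x, y⁆) :: b).map Prod.fst))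
            (a ++ (p + q, ⁅x, y⁆) :: b) ?_ le_rfl ?_
          · have h1 : (a ++ (p, x) :: (q, y) :: b).length ≤ n + 1 := hlen
            simp only [List.length_append, List.length_cons] at h1 ⊢
            omega
          · intro pX hpX
            simp only [List.mem_append, List.mem_cons] at hpX
            rcases hpX with h | rfl | h
            · exact hm pX (by simp [h])
            · exact hgb p q x hx y hy
            · exact hm pX (by simp [h])

end MonoAux

/-- For a ℤ-graded real Lie algebra 𝔰 acting on a module 𝔩 and `Y ∈ 𝔩`,
the 𝔰-submodule generated by `Y` is spanned by the homogeneous decreasing Lie monomials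
`[X₁,[X₂,…,[Xᵣ,Y]…]]` with each `Xᵢ` homogeneous of degree `pᵢ` and `p₁ ≥ p₂ ≥ … ≥ pᵣ`. -/
theorem abelian_ext_lieSpan_eq_span_decreasing_monomials
    {L M : Type*} [LieRing L] [LieAlgebra ℝ L]
    [AddCommGroup M] [Module ℝ M] [LieRingModule L M] [LieModule ℝ L M]
    (g : ℤ → Submodule ℝ L) (hg : DirectSum.IsInternal g)
    (hgb : ∀ p q : ℤ, ∀ x ∈ g p, ∀ y ∈ g q, ⁅x, y⁆ ∈ g (p + q))
    (Y : M) :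
    (LieSubmodule.lieSpan ℝ L {Y}).toSubmodule =
      Submodule.span ℝ { m : M | ∃ l : List (ℤ × L),
        (∀ pX ∈ l, pX.2 ∈ g pX.1) ∧
        (l.map Prod.fst).Pairwise (· ≥ ·) ∧
        m = l.foldr (fun pX acc => ⁅pX.2, acc⁆) Y } := by
  set S : Submodule ℝ M := Submodule.span ℝ { m : M | ∃ l : List (ℤ × L),
    (∀ pX ∈ l, pX.2 ∈ g pX.1) ∧
    (l.map Prod.fst).Pairwise (· ≥ ·) ∧
    m = l.foldr (fun pX acc => ⁅pX.2, acc⁆) Y } with hS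
  have hlie : ∀ (x : L) (m : M), m ∈ S → ⁅x, m⁆ ∈ S := by
    intro x m hm
    induction hm using Submodule.span_induction with
    | mem m hm' =>
      obtain ⟨l, h1, _, rfl⟩ := hm'
      have hx : x ∈ ⨆ p, g p := by
        rw [hg.submodule_iSup_eq_top]; trivial
      refine Submodule.iSup_induction (motive := fun x' =>
        ⁅x', l.foldr (fun pX acc => ⁅pX.2, acc⁆) Y⁆ ∈ S) g hx ?_ ?_ ?_
      · intro p z hz
        have := MonoAux.key g hgb Y (l.length + 1)
          (MonoAux.inv (((p, z) :: l).map Prod.fst)) ((p, z) :: l)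
          (by simp) le_rfl ?_
        · exact this
        · intro pX hpX
          rcases List.mem_cons.1 hpX with rfl | h
          · exact hz
          · exact h1 pX h
      · simp [zero_lie]
      · intro u v hu hv
        rw [add_lie]; exact add_mem hu hv
    | zero => simp [lie_zero]
    | add u v _ _ hu hv => rw [lie_add]; exact add_mem hu hv
    | smul r u _ hu => rw [lie_smul]; exact Submodule.smul_mem _ _ hu
  apply _root_.le_antisymm
  · have : LieSubmodule.lieSpan ℝ L {Y} ≤
        { toSubmodule := S, lie_mem := fun {x m} hm => hlie x m hm } := by
      rw [LieSubmodule.lieSpan_le]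
      intro m hm
      rcases hm with rfl
      exact Submodule.subset_span ⟨[], by simp, List.Pairwise.nil, rfl⟩
    exact this
  · rw [Submodule.span_le]
    rintro m ⟨l, h1, _, rfl⟩
    clear hS
    have : ∀ l' : List (ℤ × L), l'.foldr (fun pX acc => ⁅pX.2, acc⁆) Y ∈
        (LieSubmodule.lieSpan ℝ L {Y} : LieSubmodule ℝ L M) := by
      intro l'
      induction l' with
      | nil => exact LieSubmodule.subset_lieSpan rfl
      | cons hd t ih => exact LieSubmodule.lie_mem _ ih
    exact this l
end

section
/- Let 𝔰 be a finite dimensional semisimple ℤ-graded real Lie algebra and 𝔩 a finite dimensional irreducible 𝔰-module. If 𝔩 = ⊕ₚ 𝔩ₚ and 𝔩 = ⊕ₚ 𝔩′ₚ are two gradations of 𝔩, then there exists an integer k such that 𝔩′ₚ = 𝔩_{p+k} for all p ∈ ℤ. -/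
open DirectSum

section prjsec
variable {M : Type*} [AddCommGroup M] [Module ℝ M]

/-- projection onto the `q`-th piece of an internal direct sum decomposition. -/
noncomputable def prjAux (f : ℤ → Submodule ℝ M) (hf : DirectSum.IsInternal f) (q : ℤ) :
    M →ₗ[ℝ] M :=
  (f q).subtype ∘ₗ (DirectSum.component ℝ ℤ (fun p => f p) q) ∘ₗ
    (LinearEquiv.ofBijective (DirectSum.coeLinearMap f) hf).symm.toLinearMap

variable {f : ℤ → Submodule ℝ M} (hf : DirectSum.IsInternal f)

lemma prjAux_mem (q : ℤ) (m : M) : prjAux f hf q m ∈ f q := by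
  simp only [prjAux, LinearMap.comp_apply]
  exact ((LinearEquiv.ofBijective (DirectSum.coeLinearMap f) hf).symm m q).2

lemma prjAux_of_mem {q : ℤ} {m : M} (hm : m ∈ f q) (t : ℤ) :
    prjAux f hf t m = if t = q then m else 0 := by
  simp only [prjAux, LinearMap.comp_apply]
  split_ifs with ht
  · subst ht
    rw [show ((DirectSum.component ℝ ℤ (fun p => f p) t)
        ((LinearEquiv.ofBijective (DirectSum.coeLinearMap f) hf).symm.toLinearMap m))
        = (⟨m, hm⟩ : f t) from hf.ofBijective_coeLinearMap_of_mem hm]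
    rfl
  · rw [show ((DirectSum.component ℝ ℤ (fun p => f p) t)
        ((LinearEquiv.ofBijective (DirectSum.coeLinearMap f) hf).symm.toLinearMap m))
        = (0 : f t) from hf.ofBijective_coeLinearMap_of_mem_ne (Ne.symm ht) hm]
    rfl

lemma prjAux_self_of_mem {q : ℤ} {m : M} (hm : m ∈ f q) : prjAux f hf q m = m := by
  simp [prjAux_of_mem hf hm]

lemma prjAux_zero_of_mem {q t : ℤ} {m : M} (hm : m ∈ f q) (ht : t ≠ q) :
    prjAux f hf t m = 0 := by
  simp [prjAux_of_mem hf hm, ht]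

lemma sum_prjAux (F : Finset ℤ) (hF : ∀ q : ℤ, f q ≠ ⊥ → q ∈ F) (m : M) :
    ∑ q ∈ F, prjAux f hf q m = m := by
  classical
  set e := LinearEquiv.ofBijective (DirectSum.coeLinearMap f) hf with he
  have hsupp : (e.symm m).support ⊆ F := by
    intro q hq
    refine hF q fun hbot => ?_
    rw [DFinsupp.mem_support_iff] at hq
    exact hq (Subtype.ext (by simpa [hbot] using ((e.symm m) q).2))
  have hrepr : m = DirectSum.coeLinearMap f (e.symm m) := (e.apply_symm_apply m).symm
  calc ∑ q ∈ F, prjAux f hf q m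
      = ∑ q ∈ F, ((e.symm m) q : M) := rfl
    _ = ∑ q ∈ (e.symm m).support, ((e.symm m) q : M) := by
        refine (Finset.sum_subset hsupp fun q _ hq => ?_).symm
        rw [DFinsupp.notMem_support_iff] at hq
        simp [hq]
    _ = m := by
        conv_rhs => rw [hrepr]
        conv_rhs => rw [← DirectSum.sum_support_of (e.symm m)]
        rw [map_sum]
        exact Finset.sum_congr rfl fun q _ => by rw [DirectSum.coeLinearMap_of]

lemma sum_prjAux_shift (F : Finset ℤ) (c : ℤ) (hF : ∀ q : ℤ, f q ≠ ⊥ → q - c ∈ F) (m : M) :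
    ∑ n ∈ F, prjAux f hf (c + n) m = m := by
  classical
  have him : ∑ q ∈ F.image (fun n => c + n), prjAux f hf q m
      = ∑ n ∈ F, prjAux f hf (c + n) m :=
    Finset.sum_image (fun a _ b _ hab => by omega)
  rw [← him]
  exact sum_prjAux hf _ (fun q hq => Finset.mem_image.2 ⟨q - c, hF q hq, by ring⟩) m

end prjsec

/-- two gradations of a finite dimensional irreducible module over a finite
dimensional semisimple ℤ-graded real Lie algebra differ by a shift: there is `k ∈ ℤ`
with `𝔩′ₚ = 𝔩_{p+k}` for all `p`. -/
theorem gradations_of_irreducible_module_differ_by_shift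
    {L M : Type*} [LieRing L] [LieAlgebra ℝ L] [FiniteDimensional ℝ L]
    [LieAlgebra.IsSemisimple ℝ L]
    [AddCommGroup M] [Module ℝ M] [LieRingModule L M] [LieModule ℝ L M]
    [FiniteDimensional ℝ M]
    (g : ℤ → Submodule ℝ L) (hg : DirectSum.IsInternal g)
    (hgb : ∀ p q : ℤ, ∀ x ∈ g p, ∀ y ∈ g q, ⁅x, y⁆ ∈ g (p + q))
    (hirr : ∀ N : LieSubmodule ℝ L M, N ≠ ⊥ → N = ⊤) (hM : (⊤ : Submodule ℝ M) ≠ ⊥)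
    (h h' : ℤ → Submodule ℝ M)
    (hh : DirectSum.IsInternal h)
    (hhb : ∀ p q : ℤ, ∀ x ∈ g p, ∀ m ∈ h q, ⁅x, m⁆ ∈ h (p + q))
    (hh' : DirectSum.IsInternal h')
    (hhb' : ∀ p q : ℤ, ∀ x ∈ g p, ∀ m ∈ h' q, ⁅x, m⁆ ∈ h' (p + q)) :
    ∃ k : ℤ, ∀ p : ℤ, h' p = h (p + k) := by
  classical
  -- finite supports
  have hfinh : {q : ℤ | h q ≠ ⊥}.Finite :=
    Submodule.finite_ne_bot_of_iSupIndep hh.submodule_iSupIndep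
  have hfinh' : {q : ℤ | h' q ≠ ⊥}.Finite :=
    Submodule.finite_ne_bot_of_iSupIndep hh'.submodule_iSupIndep
  set Sh : Finset ℤ := hfinh.toFinset with hSh
  set Sh' : Finset ℤ := hfinh'.toFinset with hSh'
  have memSh : ∀ q : ℤ, q ∈ Sh ↔ h q ≠ ⊥ := fun q => hfinh.mem_toFinset
  have memSh' : ∀ q : ℤ, q ∈ Sh' ↔ h' q ≠ ⊥ := fun q => hfinh'.mem_toFinset
  set πh : ℤ → M →ₗ[ℝ] M := prjAux h hh with hπh
  set πh' : ℤ → M →ₗ[ℝ] M := prjAux h' hh' with hπh'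
  set N : Finset ℤ := Finset.image (fun pq : ℤ × ℤ => pq.1 - pq.2) (Sh ×ˢ Sh') with hN
  set T : ℤ → M →ₗ[ℝ] M := fun n => ∑ p ∈ Sh', (πh (p + n)) ∘ₗ (πh' p) with hT
  -- action of `T n` on `h' p`
  have hTact : ∀ (n p : ℤ) (m : M), m ∈ h' p → T n m = πh (p + n) m := by
    intro n p m hm
    by_cases hp : p ∈ Sh'
    · have hz : ∀ p' ∈ Sh', p' ≠ p → (πh (p' + n) ∘ₗ πh' p') m = 0 := by
        intro p' _ hne
        simp [LinearMap.comp_apply, hπh', prjAux_zero_of_mem hh' hm hne]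
      calc T n m = ∑ p' ∈ Sh', (πh (p' + n) ∘ₗ πh' p') m := by
            simp [hT, LinearMap.sum_apply]
        _ = (πh (p + n) ∘ₗ πh' p) m := Finset.sum_eq_single p
            (fun p' h1 h2 => hz p' h1 h2) (fun hc => absurd hp hc)
        _ = πh (p + n) m := by
            simp [LinearMap.comp_apply, hπh', prjAux_self_of_mem hh' hm]
    · have hbot : h' p = ⊥ := by
        by_contra hb; exact hp ((memSh' p).2 hb)
      have hm0 : m = 0 := by simpa [hbot] using hm
      simp [hm0]
  have hTmem : ∀ (n p : ℤ) (m : M), m ∈ h' p → T n m ∈ h (p + n) := by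
    intro n p m hm
    rw [hTact n p m hm]
    exact prjAux_mem hh _ m
  -- `T n` commutes with the action of every graded element, hence with every element
  have hTcomm_graded : ∀ (n r : ℤ), ∀ x ∈ g r, ∀ m : M, T n ⁅x, m⁆ = ⁅x, T n m⁆ := by
    intro n r x hx m
    have key : ∀ p₀ : ℤ, ∀ m ∈ h' p₀, T n ⁅x, m⁆ = ⁅x, T n m⁆ := by
      intro p₀ m hm
      have hbr : ⁅x, m⁆ ∈ h' (r + p₀) := hhb' r p₀ x hx m hm
      rw [hTact n (r + p₀) _ hbr, hTact n p₀ m hm]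
      have hmsum : m = ∑ q ∈ Sh, πh q m :=
        (sum_prjAux hh Sh (fun q hq => (memSh q).2 hq) m).symm
      have hliesum : ⁅x, m⁆ = ∑ q ∈ Sh, ⁅x, πh q m⁆ := by
        conv_lhs => rw [hmsum]
        rw [show ∀ v : M, ⁅x, v⁆ = LieModule.toEnd ℝ L M x v from fun v => rfl]
        rw [map_sum]
        rfl
      rw [hliesum, map_sum]
      have hterm : ∀ q ∈ Sh, πh (r + p₀ + n) ⁅x, πh q m⁆
          = if q = p₀ + n then ⁅x, πh q m⁆ else 0 := by
        intro q _
        have hmem : ⁅x, πh q m⁆ ∈ h (r + q) := hhb r q x hx _ (prjAux_mem hh q m)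
        rw [hπh, prjAux_of_mem hh hmem]
        by_cases hq : q = p₀ + n
        · have : r + p₀ + n = r + q := by omega
          simp [hq, this]
          rfl
        · have : r + p₀ + n ≠ r + q := fun hc => hq (by omega)
          simp [hq, this]
      rw [Finset.sum_congr rfl hterm, Finset.sum_ite_eq' Sh (p₀ + n) (fun q => ⁅x, πh q m⁆)]
      by_cases hmem : p₀ + n ∈ Sh
      · simp [hmem]
      · have hbot : h (p₀ + n) = ⊥ := by
          by_contra hb; exact hmem ((memSh _).2 hb)
        have hz : πh (p₀ + n) m = 0 := by
          have := prjAux_mem hh (p₀ + n) m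
          simpa [hπh, hbot] using this
        simp [hmem, hz]
    have hmem : m ∈ ⨆ p, h' p := by
      rw [hh'.submodule_iSup_eq_top]; trivial
    refine Submodule.iSup_induction (motive := fun m => T n ⁅x, m⁆ = ⁅x, T n m⁆) h' hmem
      (fun p m hm => key p m hm) (by simp) ?_
    intro a b ha hb
    rw [lie_add, map_add, ha, hb, map_add, lie_add]
  have hTcomm : ∀ (n : ℤ) (x : L) (m : M), T n ⁅x, m⁆ = ⁅x, T n m⁆ := by
    intro n x m
    have hx : x ∈ ⨆ r, g r := by rw [hg.submodule_iSup_eq_top]; trivial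
    refine Submodule.iSup_induction (motive := fun x => ∀ m : M, T n ⁅x, m⁆ = ⁅x, T n m⁆) g hx
      (fun r x hx m => hTcomm_graded n r x hx m) (by intro m; simp) ?_ m
    intro a b ha hb m
    rw [add_lie, map_add, ha, hb, add_lie]
  -- Schur: a nonzero `T n` is injective
  have hSchur : ∀ n : ℤ, T n ≠ 0 → Function.Injective (T n) := by
    intro n hn
    set K : LieSubmodule ℝ L M :=
      { toSubmodule := LinearMap.ker (T n)
        lie_mem := by
          intro x m hm
          have hm' : T n m = 0 := hm
          show T n ⁅x, m⁆ = 0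
          rw [hTcomm n x m, hm', lie_zero] } with hK
    by_cases hKbot : K = ⊥
    · have hker : LinearMap.ker (T n) = ⊥ := by
        have := congrArg (fun N : LieSubmodule ℝ L M => (N : Submodule ℝ M)) hKbot
        simpa [hK] using this
      exact LinearMap.ker_eq_bot.1 hker
    · exfalso
      have hKtop := hirr K hKbot
      apply hn
      ext m
      have hm : m ∈ LinearMap.ker (T n) := by
        have : m ∈ K := by rw [hKtop]; trivial
        simpa [hK] using this
      simpa using hm
  -- the `T n`, for `n ∈ N`, sum to the identity
  have hTsum : ∀ m : M, ∑ n ∈ N, T n m = m := by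
    intro m
    have hswap : ∑ n ∈ N, T n m = ∑ p ∈ Sh', ∑ n ∈ N, πh (p + n) (πh' p m) := by
      simp only [hT, LinearMap.sum_apply, LinearMap.comp_apply]
      rw [Finset.sum_comm]
    rw [hswap]
    have hinner : ∀ p ∈ Sh', ∑ n ∈ N, πh (p + n) (πh' p m) = πh' p m := by
      intro p hp
      refine sum_prjAux_shift hh N p (fun q hq => ?_) _
      have hqSh : q ∈ Sh := (memSh q).2 hq
      exact Finset.mem_image.2 ⟨(q, p), Finset.mem_product.2 ⟨hqSh, hp⟩, rfl⟩
    rw [Finset.sum_congr rfl hinner]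
    exact sum_prjAux hh' Sh' (fun q hq => (memSh' q).2 hq) m
  -- existence of a nonzero `T k`
  obtain ⟨k, hk⟩ : ∃ k : ℤ, T k ≠ 0 := by
    by_contra hc
    push_neg at hc
    apply hM
    rw [eq_bot_iff]
    intro m _
    have hs := hTsum m
    simp only [hc, LinearMap.zero_apply, Finset.sum_const_zero] at hs
    simpa using hs.symm
  -- uniqueness of the nonzero `T`
  have huniq : ∀ n : ℤ, n ≠ k → T n = 0 := by
    intro n hnk
    by_contra hn
    have hinj : ∀ j : ℤ, T j ≠ 0 → Function.Bijective (T j) := by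
      intro j hj
      have hi := hSchur j hj
      exact ⟨hi, (LinearMap.injective_iff_surjective).1 hi⟩
    have hsupp : ∀ j : ℤ, T j ≠ 0 → ∀ p : ℤ, (h' p ≠ ⊥ ↔ h (p + j) ≠ ⊥) := by
      intro j hj p
      obtain ⟨hinj', hsurj'⟩ := hinj j hj
      constructor
      · intro hp
        obtain ⟨m, hm, hm0⟩ := Submodule.ne_bot_iff _ |>.1 hp
        intro hbot
        have h1 : T j m ∈ h (p + j) := hTmem j p m hm
        have h2 : T j m = 0 := by rw [hbot] at h1; simpa using h1
        have : m = 0 := hinj' (by simpa using h2)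
        exact hm0 this
      · intro hq
        obtain ⟨v, hv, hv0⟩ := Submodule.ne_bot_iff _ |>.1 hq
        obtain ⟨m, rfl⟩ := hsurj' v
        intro hbot
        have hmsum : m = ∑ p' ∈ Sh', πh' p' m :=
          (sum_prjAux hh' Sh' (fun q hq => (memSh' q).2 hq) m).symm
        have hTv : T j m = ∑ p' ∈ Sh', T j (πh' p' m) := by
          conv_lhs => rw [hmsum]
          rw [map_sum]
        have hterm : ∀ p' ∈ Sh', πh (p + j) (T j (πh' p' m)) = 0 := by
          intro p' hp'
          have hmem : T j (πh' p' m) ∈ h (p' + j) := hTmem j p' _ (prjAux_mem hh' p' m)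
          have hne : p + j ≠ p' + j := by
            intro hc
            have hpp : p = p' := by omega
            subst hpp
            exact ((memSh' p).1 hp') hbot
          exact prjAux_zero_of_mem hh hmem hne
        have hz : T j m = 0 := by
          have h1 : πh (p + j) (T j m) = T j m := prjAux_self_of_mem hh hv
          rw [hTv, map_sum, Finset.sum_congr rfl hterm, Finset.sum_const_zero] at h1
          rw [hTv, ← h1]
        exact hv0 hz
    have hshift : ∀ q : ℤ, (h q ≠ ⊥ ↔ h (q + (k - n)) ≠ ⊥) := by
      intro q
      have h1 := hsupp n hn (q - n)
      have h2 := hsupp k hk (q - n)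
      rw [show q - n + n = q by ring] at h1
      rw [show q - n + k = q + (k - n) by ring] at h2
      exact h1.symm.trans h2
    obtain ⟨m, _, hm0⟩ := Submodule.ne_bot_iff _ |>.1 hM
    have hmsum : m = ∑ q ∈ Sh, πh q m :=
      (sum_prjAux hh Sh (fun q hq => (memSh q).2 hq) m).symm
    have hex : ∃ q₀, h q₀ ≠ ⊥ := by
      by_contra hc
      push_neg at hc
      apply hm0
      rw [hmsum]
      refine Finset.sum_eq_zero fun q hq => ?_
      exact absurd ((memSh q).1 hq) (by simp [hc q])
    obtain ⟨q₀, hq₀⟩ := hex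
    have hd0 : (k - n : ℤ) ≠ 0 := by omega
    have hall : ∀ j : ℕ, h (q₀ + j * (k - n)) ≠ ⊥ := by
      intro j
      induction j with
      | zero => simpa using hq₀
      | succ i ih =>
        have hstep := (hshift (q₀ + i * (k - n))).1 ih
        rwa [show q₀ + (i : ℤ) * (k - n) + (k - n) = q₀ + ((i : ℕ) + 1 : ℕ) * (k - n) by
          push_cast; ring] at hstep
    have hinf : {q : ℤ | h q ≠ ⊥}.Infinite := by
      apply Set.infinite_of_injective_forall_mem
        (f := fun j : ℕ => q₀ + (j : ℤ) * (k - n))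
      · intro a b hab
        simp only at hab
        have hmul : (a : ℤ) * (k - n) = (b : ℤ) * (k - n) := by omega
        have : (a : ℤ) = b := mul_right_cancel₀ hd0 hmul
        exact_mod_cast this
      · intro j
        exact hall j
    exact hinf hfinh
  -- `h' p ≤ h (p + k)`
  have hsub : ∀ p : ℤ, ∀ u : M, u ∈ h' p → u ∈ h (p + k) := by
    intro p u hu
    have hmsum := hTsum u
    have hcollapse : ∑ n ∈ N, T n u = if k ∈ N then T k u else 0 := by
      rw [Finset.sum_congr rfl (fun n _ => ?_),
        Finset.sum_ite_eq' N k (fun n => T n u)]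
      by_cases hnk : n = k
      · simp [hnk]
      · simp [hnk, huniq n hnk]
    rw [hcollapse] at hmsum
    by_cases hkN : k ∈ N
    · rw [if_pos hkN] at hmsum
      rw [← hmsum]
      exact hTmem k p u hu
    · rw [if_neg hkN] at hmsum
      rw [← hmsum]
      exact Submodule.zero_mem _
  refine ⟨k, fun p => le_antisymm (fun m hm => hsub p m hm) ?_⟩
  -- `h (p + k) ≤ h' p`
  intro v hv
  have hvsum : v = ∑ p' ∈ Sh', πh' p' v :=
    (sum_prjAux hh' Sh' (fun q hq => (memSh' q).2 hq) v).symm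
  have hterm : ∀ p' ∈ Sh', πh (p + k) (πh' p' v) = if p' = p then πh' p' v else 0 := by
    intro p' _
    have hmem : πh' p' v ∈ h (p' + k) := hsub p' _ (prjAux_mem hh' p' v)
    rw [hπh, prjAux_of_mem hh hmem]
    by_cases hp' : p' = p
    · simp [hp']
    · have hne : p + k ≠ p' + k := fun hc => hp' (by omega)
      simp [hp', hne]
  have e1 : πh (p + k) v = v := prjAux_self_of_mem hh hv
  have e2 : πh (p + k) v = if p ∈ Sh' then πh' p v else 0 := by
    conv_lhs => rw [hvsum]
    rw [map_sum, Finset.sum_congr rfl hterm,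
      Finset.sum_ite_eq' Sh' p (fun p' => πh' p' v)]
  by_cases hpS : p ∈ Sh'
  · rw [if_pos hpS] at e2
    rw [← e1, e2]
    exact prjAux_mem hh' p v
  · rw [if_neg hpS] at e2
    rw [← e1, e2]
    exact Submodule.zero_mem _
end
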